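/- Blocks are independent in any selective subset: if M is a selective subset of (G,C) and v is a vertex lying in block B with ℓ = C(v), then there exists a vertex u ∈ M ∩ B with C(u) = C(v) and d(v,u) = min_{w ∈ M ∪ (V ∖ V_ℓ)} d(v,w); that is, some nearest same-colored witness for v can always be chosen inside v's own block. -/

import Mathlib

/-- The set of nearest neighbors of `v` in `U` with respect to hop-distance in `G`:
`N̂(v,U) = {u ∈ U : d(v,u) = min_{w ∈ U} d(v,w)}` (empty if `U` is empty). -/
def NearestSet {V : Type*} (G : SimpleGraph V) (v : V) (U : Set V) : Set V :=
  {u | u ∈ U ∧ ∀ w ∈ U, G.dist v u ≤ G.dist v w}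

/-- `S` is a selective subset of `(G, C)`: every vertex `v` has, among its nearest
neighbors in `S ∪ (V ∖ V_{C v})`, at least one vertex of its own color. -/
def IsSelective {V α : Type*} (G : SimpleGraph V) (C : V → α) (S : Set V) : Prop :=
  ∀ v : V, ∃ u ∈ NearestSet G v (S ∪ {w | C w ≠ C v}), C u = C v

/-- The subgraph of `G` keeping only edges between vertices of the same color. -/
def sameColorGraph {V α : Type*} (G : SimpleGraph V) (C : V → α) : SimpleGraph V where
  Adj u w := G.Adj u w ∧ C u = C w
  symm := ⟨fun _ _ h => ⟨h.1.symm, h.2.symm⟩⟩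
  loopless := ⟨fun u h => G.loopless.irrefl u h.1⟩

/-- A block of `(G, C)` is a maximal monochromatic connected set of vertices, i.e. a
connected component of the subgraph induced by one color class. -/
def IsBlock {V α : Type*} (G : SimpleGraph V) (C : V → α) (B : Set V) : Prop :=
  ∃ v : V, B = {u | (sameColorGraph G C).Reachable u v}

lemma aux_reach {V α : Type*} (G : SimpleGraph V) (hconn : G.Connected)
    (C : V → α) (v : V) :
    ∀ n u, G.dist v u ≤ n → C u = C v →
      (∀ w, C w ≠ C v → G.dist v u ≤ G.dist v w) →
      (sameColorGraph G C).Reachable v u := by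
  intro n
  induction n with
  | zero =>
    intro u h _ _
    have : v = u := (hconn.dist_eq_zero_iff).mp (Nat.le_zero.mp h)
    exact this ▸ SimpleGraph.Reachable.refl v
  | succ n ih =>
    intro u h hc hmin
    rcases Nat.lt_or_ge (G.dist v u) (n + 1) with hlt | hge
    · exact ih u (Nat.lt_succ_iff.mp hlt) hc hmin
    · have hd : G.dist v u = n + 1 := le_antisymm h hge
      obtain ⟨p, hp⟩ := (hconn u v).exists_walk_length_eq_dist
      rw [SimpleGraph.dist_comm, hd] at hp
      cases p with
      | nil => simp at hp
      | cons hadj q =>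
        rename_i x
        have hq : q.length = n := by simpa using hp
        have hdx : G.dist v x ≤ n := by
          rw [SimpleGraph.dist_comm]; exact hq ▸ SimpleGraph.dist_le q
        have hcx : C x = C v := by
          by_contra hne
          have := hmin x hne
          omega
        have hvx := ih x hdx hcx (fun w hw => by
          have := hmin w hw; omega)
        have hxu : (sameColorGraph G C).Adj x u := ⟨hadj.symm, hcx.trans hc.symm⟩
        exact hvx.trans hxu.reachable

/-- Blocks are independent in any selective subset: if `M` is selective and `v` lies in
block `B`, then some vertex `u ∈ M ∩ B` of the same color as `v` is a nearest neighbor of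
`v` in `M ∪ (V ∖ V_{C v})`. -/
theorem stmt_5 {V : Type*} [Fintype V] {c : ℕ} (G : SimpleGraph V) (hconn : G.Connected)
    (C : V → Fin c) (M : Set V) (hM : IsSelective G C M)
    (B : Set V) (hB : IsBlock G C B) (v : V) (hv : v ∈ B) :
    ∃ u : V, u ∈ M ∩ B ∧ C u = C v ∧
      u ∈ NearestSet G v (M ∪ {w | C w ≠ C v}) := by
  obtain ⟨u, ⟨huS, humin⟩, hcu⟩ := hM v
  have huM : u ∈ M := by
    rcases huS with h | h
    · exact h
    · exact absurd hcu h
  have hmin' : ∀ w, C w ≠ C v → G.dist v u ≤ G.dist v w :=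
    fun w hw => humin w (Or.inr hw)
  have hreach : (sameColorGraph G C).Reachable v u :=
    aux_reach G hconn C v (G.dist v u) u le_rfl hcu hmin'
  obtain ⟨v₀, rfl⟩ := hB
  exact ⟨u, ⟨huM, hreach.symm.trans hv⟩, hcu, ⟨huS, humin⟩⟩
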